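/- Finite-sum primal decomposition: let {U^(i)} be row-orthonormal matrices with U^(i)(U^(i))ᵀ = I and U^(i)(U^(j))ᵀ = 0 for i ≠ j (similarly {V^(i)}), and define f̄(x,y) = (1/n)∑_i [H_d(U^(i)x, V^(i)y) + c·Γ_d^n(x)] as in the averaged-smooth hard instance, whose y-quadratic term is −(λ₂/n)‖y‖². Then the primal function Φ̄(x) = max_y f̄(x,y) equals (1/n) ∑_{i=1}^n Φ_d(U^(i) x), where Φ_d is the primal function of the single-block hard instance. -/

import Mathlib

open scoped BigOperators

/-- The matrix `B_d ∈ ℝ^{(d+2)×(d+1)}` of the hard instance (0-indexed). -/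
noncomputable def Bmat (d : ℕ) (α : ℝ) : Matrix (Fin (d + 2)) (Fin (d + 1)) ℝ :=
  fun i j =>
    if (i : ℕ) = 0 then (if (j : ℕ) = d then 1 else 0)
    else if (i : ℕ) = d + 1 then (if (j : ℕ) = 0 then α ^ ((1 : ℝ) / 4) else 0)
    else if (j : ℕ) = d - (i : ℕ) then 1
    else if (j : ℕ) = d - (i : ℕ) + 1 then -1
    else 0

/-- `A_d = B_dᵀ B_d − e_{d+1} e_{d+1}ᵀ`. -/
noncomputable def Amat (d : ℕ) (α : ℝ) : Matrix (Fin (d + 1)) (Fin (d + 1)) ℝ :=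
  (Bmat d α).transpose * Bmat d α - Matrix.single (Fin.last d) (Fin.last d) 1

/-- `Γ(t) = 120 ∫_1^t s²(s−1)/(1+s²) ds`. -/
noncomputable def Gam (t : ℝ) : ℝ := 120 * ∫ s in (1 : ℝ)..t, s ^ 2 * (s - 1) / (1 + s ^ 2)

/-- `Γ_d(u) = ∑_{j=1}^d Γ(u_j)`. -/
noncomputable def Gamd (d : ℕ) (u : Fin (d + 1) → ℝ) : ℝ := ∑ i : Fin d, Gam (u i.castSucc)

/-- The block `H_d` of the finite-sum hard instance. -/
noncomputable def Hd (d : ℕ) (α lam1 lam2 : ℝ) (u : Fin (d + 1) → ℝ)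
    (v : Fin (d + 2) → ℝ) : ℝ :=
  lam1 * dotProduct ((Bmat d α).mulVec u) v - lam2 * dotProduct v v
    - lam1 ^ 2 * Real.sqrt α / (2 * lam2) * u 0
    - lam1 ^ 2 * α / (4 * lam2) * (u (Fin.last d)) ^ 2
    + lam1 ^ 2 * Real.sqrt α / (4 * lam2)

/-- The primal function `Φ_d` of the single-block hard instance. -/
noncomputable def Phid (d : ℕ) (α lam1 lam2 : ℝ) (u : Fin (d + 1) → ℝ) : ℝ :=
  lam1 ^ 2 / (2 * lam2) *
    ((1 / 2) * dotProduct u ((Amat d α).mulVec u)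
      - Real.sqrt α * u 0 + Real.sqrt α / 2
      + α * Gamd d u + (1 - α) / 2 * (u (Fin.last d)) ^ 2)

open Matrix

lemma Vy {n d N2 : ℕ} (V : Fin n → Matrix (Fin (d + 2)) (Fin N2) ℝ)
    (hV : ∀ i, V i * (V i).transpose = 1)
    (hV' : ∀ i j, i ≠ j → V i * (V j).transpose = 0)
    (w : Fin n → Fin (d + 2) → ℝ) (c : ℝ) (i : Fin n) :
    (V i).mulVec (c • ∑ k, (V k).transpose.mulVec (w k)) = c • w i := by
  rw [Matrix.mulVec_smul]
  congr 1
  have hs := map_sum (Matrix.mulVecLin (V i))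
    (fun k => (V k).transpose.mulVec (w k)) Finset.univ
  simp only [Matrix.mulVecLin_apply] at hs
  rw [hs, Finset.sum_eq_single i]
  · rw [Matrix.mulVec_mulVec, hV i, Matrix.one_mulVec]
  · intro k _ hk
    rw [Matrix.mulVec_mulVec, hV' i k (Ne.symm hk), Matrix.zero_mulVec]
  · simp

lemma dot_self_nonneg {m : ℕ} (v : Fin m → ℝ) : 0 ≤ dotProduct v v :=
  Finset.sum_nonneg fun _ _ => mul_self_nonneg _

lemma Hd_le (d : ℕ) (α lam1 lam2 : ℝ) (h2 : 0 < lam2) (u : Fin (d + 1) → ℝ)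
    (v : Fin (d + 2) → ℝ) :
    Hd d α lam1 lam2 u v ≤
      Hd d α lam1 lam2 u ((lam1 / (2 * lam2)) • (Bmat d α).mulVec u) := by
  unfold Hd
  set a := (Bmat d α).mulVec u with ha
  set t := lam1 / (2 * lam2) with ht
  have ht' : lam1 = 2 * lam2 * t := by rw [ht]; field_simp
  have hexp : dotProduct (v - t • a) (v - t • a) =
      dotProduct v v - 2 * t * dotProduct a v
        + t ^ 2 * dotProduct a a := by
    simp only [sub_dotProduct, dotProduct_sub, smul_dotProduct,
      dotProduct_smul, dotProduct_comm v a, smul_eq_mul]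
    ring
  have h0 := dot_self_nonneg (v - t • a)
  rw [hexp] at h0
  have hd : dotProduct a (t • a) = t * dotProduct a a := by
    simp [dotProduct_smul, smul_eq_mul, Finset.mul_sum, dotProduct]
    exact Finset.sum_congr rfl fun _ _ => by ring
  have hd2 : dotProduct (t • a) (t • a) = t ^ 2 * dotProduct a a := by
    simp [dotProduct_smul, smul_dotProduct, smul_eq_mul]; ring
  rw [hd, hd2, ht']
  nlinarith [mul_nonneg h2.le h0]

lemma quad_eq (d : ℕ) (α : ℝ) (u : Fin (d + 1) → ℝ) :
    dotProduct u ((Amat d α).mulVec u) =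
      dotProduct ((Bmat d α).mulVec u) ((Bmat d α).mulVec u)
        - (u (Fin.last d)) ^ 2 := by
  unfold Amat
  rw [Matrix.sub_mulVec, dotProduct_sub]
  congr 1
  · rw [← Matrix.mulVec_mulVec, dotProduct_mulVec, Matrix.vecMul_transpose]
  · rw [dotProduct_mulVec]
    simp only [Matrix.vecMul, dotProduct, Matrix.single, Finset.mul_sum]
    rw [Finset.sum_eq_single (Fin.last d)]
    · simp [sq]
    · intro k _ hk
      simp [Ne.symm hk]
    · simp

lemma Hd_opt (d : ℕ) (α lam1 lam2 : ℝ) (h2 : 0 < lam2) (u : Fin (d + 1) → ℝ) :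
    Hd d α lam1 lam2 u ((lam1 / (2 * lam2)) • (Bmat d α).mulVec u)
        + lam1 ^ 2 * α / (2 * lam2) * Gamd d u = Phid d α lam1 lam2 u := by
  unfold Hd Phid
  rw [quad_eq]
  set a := (Bmat d α).mulVec u with ha
  set t := lam1 / (2 * lam2) with ht
  have hd : dotProduct a (t • a) = t * dotProduct a a := by
    simp [dotProduct_smul, smul_eq_mul, Finset.mul_sum, dotProduct]
    exact Finset.sum_congr rfl fun _ _ => by ring
  have hd2 : dotProduct (t • a) (t • a) = t ^ 2 * dotProduct a a := by
    simp [dotProduct_smul, smul_dotProduct, smul_eq_mul]; ring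
  rw [hd, hd2, ht]
  field_simp
  ring

/-- Finite-sum primal decomposition: with mutually orthogonal
row-orthonormal embeddings `U⁽ⁱ⁾, V⁽ⁱ⁾`, and
`f̄(x,y) = (1/n) ∑ᵢ [H_d(U⁽ⁱ⁾x, V⁽ⁱ⁾y) + (λ₁²α/(2nλ₂)) Γ_dⁿ(x)]`
(whose `y`-quadratic is `−(λ₂/n)‖y‖²`), the maximizer over `y` is
`y*(x) = (λ₁/(2λ₂)) ∑ᵢ (V⁽ⁱ⁾)ᵀ B_d U⁽ⁱ⁾x` and the primal function satisfies
`Φ̄(x) = max_y f̄(x,y) = (1/n) ∑ᵢ Φ_d(U⁽ⁱ⁾x)`. -/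
theorem finite_sum_primal_decomposition
    (n d N1 N2 : ℕ) (hn : 0 < n) (α lam1 lam2 : ℝ)
    (hα : α ∈ Set.Icc (0 : ℝ) 1) (h1 : 0 < lam1) (h2 : 0 < lam2)
    (U : Fin n → Matrix (Fin (d + 1)) (Fin N1) ℝ)
    (V : Fin n → Matrix (Fin (d + 2)) (Fin N2) ℝ)
    (hU : ∀ i, U i * (U i).transpose = 1)
    (hU' : ∀ i j, i ≠ j → U i * (U j).transpose = 0)
    (hV : ∀ i, V i * (V i).transpose = 1)
    (hV' : ∀ i j, i ≠ j → V i * (V j).transpose = 0) :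
    ∀ x : Fin N1 → ℝ,
      IsMaxOn
        (fun y : Fin N2 → ℝ => (1 / n : ℝ) * ∑ i,
          (Hd d α lam1 lam2 ((U i).mulVec x) ((V i).mulVec y)
            + lam1 ^ 2 * α / (2 * n * lam2) * ∑ j, Gamd d ((U j).mulVec x)))
        Set.univ
        ((lam1 / (2 * lam2)) •
          ∑ i, (V i).transpose.mulVec ((Bmat d α).mulVec ((U i).mulVec x))) ∧
      (1 / n : ℝ) * ∑ i,
          (Hd d α lam1 lam2 ((U i).mulVec x)
              ((V i).mulVec ((lam1 / (2 * lam2)) •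
                ∑ k, (V k).transpose.mulVec ((Bmat d α).mulVec ((U k).mulVec x))))
            + lam1 ^ 2 * α / (2 * n * lam2) * ∑ j, Gamd d ((U j).mulVec x))
        = (1 / n : ℝ) * ∑ i, Phid d α lam1 lam2 ((U i).mulVec x) := by
  intro x
  have hn' : (n : ℝ) ≠ 0 := Nat.cast_ne_zero.mpr hn.ne'
  have key : ∀ i : Fin n, (V i).mulVec ((lam1 / (2 * lam2)) •
      ∑ k, (V k).transpose.mulVec ((Bmat d α).mulVec ((U k).mulVec x)))
      = (lam1 / (2 * lam2)) • (Bmat d α).mulVec ((U i).mulVec x) :=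
    fun i => Vy V hV hV' (fun k => (Bmat d α).mulVec ((U k).mulVec x)) _ i
  constructor
  · rw [isMaxOn_iff]
    intro y _
    apply mul_le_mul_of_nonneg_left _ (by positivity)
    apply Finset.sum_le_sum
    intro i _
    rw [key i]
    exact add_le_add_left (Hd_le d α lam1 lam2 h2 _ _) _
  · simp only [key]
    congr 1
    have hphi : ∑ i, Phid d α lam1 lam2 ((U i).mulVec x)
        = ∑ i, (Hd d α lam1 lam2 ((U i).mulVec x)
              ((lam1 / (2 * lam2)) • (Bmat d α).mulVec ((U i).mulVec x))
            + lam1 ^ 2 * α / (2 * lam2) * Gamd d ((U i).mulVec x)) :=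
      Finset.sum_congr rfl fun i _ => (Hd_opt d α lam1 lam2 h2 _).symm
    rw [hphi, Finset.sum_add_distrib, Finset.sum_add_distrib, Finset.sum_const,
      Finset.card_univ, Fintype.card_fin, nsmul_eq_mul, ← Finset.mul_sum]
    congr 1
    field_simp
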